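/- Let F = 𝔽_{2^m}, let S ⊆ F with 0 ∉ S, let b, c, d ∈ F with b ≠ 0, and let S' = b⁻¹S = {b⁻¹z : z ∈ S}. Then for every t > 0, the cubelike graph Cay(F, S) has PEST from the edge (0, b) to the edge (c, d) at time t if and only if the cubelike graph Cay(F, S') has PEST from the edge (0, 1) to the edge (b⁻¹c, b⁻¹d) at time t. -/

import Mathlib

open Matrix Finset

noncomputable section

noncomputable instance (m : ℕ) : Fintype (GaloisField 2 m) := Fintype.ofFinite _
noncomputable instance (m : ℕ) : DecidableEq (GaloisField 2 m) := Classical.decEq _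

/-- The absolute trace map `Tr : 𝔽_{2^m} → 𝔽₂`. -/
def Ftr {m : ℕ} (x : GaloisField 2 m) : ZMod 2 :=
  Algebra.trace (ZMod 2) (GaloisField 2 m) x

/-- The adjacency matrix of the Cayley (cubelike) graph `Cay(G, S)`. -/
def adjMatrix {G : Type*} [AddCommGroup G] [Fintype G] [DecidableEq G]
    (S : Finset G) : Matrix G G ℂ :=
  fun u v => if u + v ∈ S then 1 else 0

/-- The transfer matrix `H(t) = exp(i t A)`. -/
def transferMatrix {G : Type*} [AddCommGroup G] [Fintype G] [DecidableEq G]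
    (S : Finset G) (t : ℝ) : Matrix G G ℂ :=
  NormedSpace.exp (Complex.I • ((t : ℂ) • adjMatrix S))

/-- The standard basis vector `e_a` of `ℂ^V`. -/
def stdBasis {G : Type*} [DecidableEq G] (a : G) : G → ℂ :=
  fun v => if v = a then 1 else 0

/-- Perfect edge state transfer from the edge `(a,b)` to the edge `(c,d)` at time `t`:
`|(1/2)(e_c - e_d)ᵀ H(t)(e_a - e_b)|² = 1`. -/
def hasPEST {G : Type*} [AddCommGroup G] [Fintype G] [DecidableEq G]
    (S : Finset G) (a b c d : G) (t : ℝ) : Prop :=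
  ‖(1 / 2 : ℂ) * dotProduct (stdBasis c - stdBasis d)
      (transferMatrix S t *ᵥ (stdBasis a - stdBasis b))‖ ^ 2 = 1

/-- The eigenvalue `λ_x = ∑_{s ∈ S} (-1)^{Tr(xs)}` of a cubelike graph on `𝔽_{2^m}`. -/
def lamF {m : ℕ} (S : Finset (GaloisField 2 m)) (x : GaloisField 2 m) : ℤ :=
  ∑ s ∈ S, (-1) ^ (Ftr (x * s)).val

lemma dot_expand {G : Type*} [Fintype G] [DecidableEq G] (M : Matrix G G ℂ) (a b c d : G) :
    dotProduct (stdBasis c - stdBasis d) (M *ᵥ (stdBasis a - stdBasis b)) =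
      M c a - M c b - M d a + M d b := by
  have hv : ∀ i, (M *ᵥ (stdBasis a - stdBasis b)) i = M i a - M i b := by
    intro i
    simp [mulVec, dotProduct, _root_.stdBasis, mul_sub, Finset.sum_sub_distrib,
      Finset.sum_ite_eq]
  simp only [dotProduct, Pi.sub_apply, sub_mul]
  simp only [hv]
  simp only [_root_.stdBasis, ite_mul, one_mul, zero_mul, Finset.sum_sub_distrib,
    Finset.sum_ite_eq, Finset.sum_ite_eq', Finset.mem_univ, if_true, mul_sub]
  ring

lemma exp_reindex {n : Type*} [Fintype n] [DecidableEq n] (e : n ≃ n) (A : Matrix n n ℂ) :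
    NormedSpace.exp (Matrix.reindexAlgEquiv ℂ ℂ e A) =
      Matrix.reindexAlgEquiv ℂ ℂ e (NormedSpace.exp A) := by
  letI : SeminormedRing (Matrix n n ℂ) := Matrix.linftyOpSemiNormedRing
  letI : NormedRing (Matrix n n ℂ) := Matrix.linftyOpNormedRing
  letI : NormedAlgebra ℂ (Matrix n n ℂ) := Matrix.linftyOpNormedAlgebra
  letI : NormedAlgebra ℚ (Matrix n n ℂ) := Matrix.linftyOpNormedAlgebra
  refine (NormedSpace.map_exp (Matrix.reindexAlgEquiv ℂ ℂ e) ?_ A).symm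
  have h : (⇑(Matrix.reindexAlgEquiv ℂ ℂ e) : Matrix n n ℂ → Matrix n n ℂ) =
      fun M => M.submatrix ⇑e.symm ⇑e.symm := by
    ext M i j; simp [Matrix.reindexAlgEquiv_apply]
  rw [h]
  exact continuous_id.matrix_submatrix _ _

/-- `Cay(𝔽_{2^m}, S)` has PEST from `(0,b)` to `(c,d)` at time `t` iff `Cay(𝔽_{2^m}, b⁻¹S)`
has PEST from `(0,1)` to `(b⁻¹c, b⁻¹d)` at time `t` (Lemma 2). -/
theorem hasPEST_scale_iff {m : ℕ} (hm : 1 ≤ m)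
    (S : Finset (GaloisField 2 m)) (h0 : (0 : GaloisField 2 m) ∉ S)
    (b c d : GaloisField 2 m) (hb : b ≠ 0) (t : ℝ) (ht : 0 < t) :
    hasPEST S 0 b c d t ↔
      hasPEST (S.image (fun z => b⁻¹ * z)) 0 1 (b⁻¹ * c) (b⁻¹ * d) t := by
  let e : GaloisField 2 m ≃ GaloisField 2 m :=
    ⟨fun x => b * x, fun x => b⁻¹ * x,
      fun x => inv_mul_cancel_left₀ hb x, fun x => mul_inv_cancel_left₀ hb x⟩
  have he : ∀ x, e x = b * x := fun _ => rfl
  have hadj : adjMatrix (S.image (fun z => b⁻¹ * z)) = (adjMatrix S).submatrix e e := by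
    ext u v
    simp only [adjMatrix, Matrix.submatrix_apply, he]
    congr 1
    simp only [Finset.mem_image, eq_iff_iff]
    constructor
    · rintro ⟨z, hz, hzz⟩
      have h1 : b * u + b * v = z := by
        rw [← mul_add, ← hzz, mul_inv_cancel_left₀ hb]
      rwa [h1]
    · intro h
      exact ⟨b * u + b * v, h, by rw [← mul_add, inv_mul_cancel_left₀ hb]⟩
  have hsub : ∀ M : Matrix (GaloisField 2 m) (GaloisField 2 m) ℂ,
      M.submatrix ⇑e ⇑e = Matrix.reindexAlgEquiv ℂ ℂ e.symm M := by
    intro M; ext i j; simp [Matrix.reindexAlgEquiv_apply]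
  have htrans : transferMatrix (S.image (fun z => b⁻¹ * z)) t =
      (transferMatrix S t).submatrix ⇑e ⇑e := by
    rw [transferMatrix, transferMatrix, hadj, hsub, hsub]
    rw [show Complex.I • (t : ℂ) • (Matrix.reindexAlgEquiv ℂ ℂ e.symm) (adjMatrix S) =
        (Matrix.reindexAlgEquiv ℂ ℂ e.symm) (Complex.I • (t : ℂ) • adjMatrix S) by
      rw [_root_.map_smul, _root_.map_smul]]
    exact exp_reindex e.symm _
  have key : dotProduct (stdBasis c - stdBasis d)
        (transferMatrix S t *ᵥ (stdBasis (0 : GaloisField 2 m) - stdBasis b)) =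
      dotProduct (stdBasis (b⁻¹ * c) - stdBasis (b⁻¹ * d))
        (transferMatrix (S.image (fun z => b⁻¹ * z)) t *ᵥ
          (stdBasis (0 : GaloisField 2 m) - stdBasis 1)) := by
    rw [htrans, dot_expand, dot_expand]
    simp only [Matrix.submatrix_apply, he, mul_inv_cancel_left₀ hb, mul_zero, mul_one]
  unfold hasPEST
  rw [key]


end
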